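/- Let n ≥ 2 be an even integer, let e_1, …, e_n be nonnegative integers with ∑_{i=1}^n e_i = 2A for an integer A, and suppose there exists a set H ⊆ {1, …, n} with |H| = n/2 and ∑_{i∈H} e_i = A. Then the constructed scheduling instance admits a feasible schedule whose total completion time ∑_j C_j is at most V' = V_s + V_m + V_b. -/

import Mathlib

open Classical

/-- Job set of the constructed instance: `n` medium jobs, `M = 200^(n²)` small jobs
and `M` big jobs. -/
abbrev RedJob (n : ℕ) := Fin n ⊕ Fin (200 ^ n ^ 2) ⊕ Fin (200 ^ n ^ 2)

/-- Processing times of the constructed instance: medium job `i` has processing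
time `20^(n²) + e i`, small jobs have processing time `1`, big jobs `200^(n²)`. -/
noncomputable def redProc (n : ℕ) (e : Fin n → ℕ) : RedJob n → ℝ
  | Sum.inl i => (20 : ℝ) ^ n ^ 2 + e i
  | Sum.inr (Sum.inl _) => 1
  | Sum.inr (Sum.inr _) => (200 : ℝ) ^ n ^ 2

/-- The second supply date `u₂ = (n/2)·20^(n²) + A`. -/
noncomputable def redU2 (n A : ℕ) : ℝ := ((n / 2 : ℕ) : ℝ) * (20 : ℝ) ^ n ^ 2 + A

/-- `V_s = M·u₂ + M(M+1)/2` where `M = 200^(n²)`. -/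
noncomputable def redVs (n A : ℕ) : ℝ :=
  (200 : ℝ) ^ n ^ 2 * redU2 n A +
    (200 : ℝ) ^ n ^ 2 * ((200 : ℝ) ^ n ^ 2 + 1) / 2

/-- `V_m = 2(20^(n²) + A)·((n/2)(n/2+1)/2) + (u₂ + 200^(n²))·(n/2)`. -/
noncomputable def redVm (n A : ℕ) : ℝ :=
  2 * ((20 : ℝ) ^ n ^ 2 + A) *
      (((n / 2 : ℕ) : ℝ) * (((n / 2 : ℕ) : ℝ) + 1) / 2) +
    (redU2 n A + (200 : ℝ) ^ n ^ 2) * ((n / 2 : ℕ) : ℝ)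

/-- `V_b = M·(u₂ + M + 20^(n²)·(n/2) + A) + M·(M(M+1)/2)` where `M = 200^(n²)`. -/
noncomputable def redVb (n A : ℕ) : ℝ :=
  (200 : ℝ) ^ n ^ 2 *
      (redU2 n A + (200 : ℝ) ^ n ^ 2 + (20 : ℝ) ^ n ^ 2 * ((n / 2 : ℕ) : ℝ) + A) +
    (200 : ℝ) ^ n ^ 2 * ((200 : ℝ) ^ n ^ 2 * ((200 : ℝ) ^ n ^ 2 + 1) / 2)

/-- `V' = V_s + V_m + V_b`. -/
noncomputable def redV' (n A : ℕ) : ℝ := redVs n A + redVm n A + redVb n A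

private lemma sum_id_real (m : ℕ) :
    ∑ k ∈ Finset.range m, ((k : ℝ) + 1) = m * (m + 1) / 2 := by
  induction m with
  | zero => simp
  | succ m ih => rw [Finset.sum_range_succ, ih]; push_cast; ring

private lemma rank_sum {α : Type*} [LinearOrder α] (F : Finset α) :
    ∑ i ∈ F, ((F.filter (fun j => j ≤ i)).card : ℝ) = F.card * (F.card + 1) / 2 := by
  classical
  induction F using Finset.induction_on_max with
  | empty => simp
  | insert a s ha ih =>
    have hmem : a ∉ s := fun h => lt_irrefl a (ha a h)
    have h1 : (insert a s).filter (fun j => j ≤ a) = insert a s :=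
      Finset.filter_eq_self.2 (fun x hx => by
        rcases Finset.mem_insert.1 hx with h | h
        · exact h ▸ le_rfl
        · exact (ha x h).le)
    have h2 : ∀ i ∈ s, (insert a s).filter (fun j => j ≤ i) = s.filter (fun j => j ≤ i) := by
      intro i hi
      rw [Finset.filter_insert, if_neg (not_le.2 (ha i hi))]
    rw [Finset.sum_insert hmem, Finset.sum_congr rfl (fun i hi => by rw [h2 i hi]), ih, h1,
      Finset.card_insert_of_notMem hmem]
    push_cast
    ring

private lemma aux_main {n Mn m : ℕ} (e : Fin n → ℕ) (P M A u2 : ℝ)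
    (p : Fin n ⊕ Fin Mn ⊕ Fin Mn → ℝ)
    (hpm : ∀ i, p (Sum.inl i) = P + e i)
    (hps : ∀ k, p (Sum.inr (Sum.inl k)) = 1)
    (hpb : ∀ k, p (Sum.inr (Sum.inr k)) = M)
    (hP0 : 0 ≤ P) (hM1 : 1 ≤ M) (hMncast : (Mn : ℝ) = M)
    (hm1 : 1 ≤ m) (hA0 : 0 ≤ A)
    (H : Finset (Fin n)) (hcard : H.card = m) (hccard : Hᶜ.card = m)
    (hHe : ∑ i ∈ H, (e i : ℝ) = A) (hCe : ∑ i ∈ Hᶜ, (e i : ℝ) = A)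
    (hu2 : u2 = m * P + A) :
    ∃ S : Fin n ⊕ Fin Mn ⊕ Fin Mn → ℝ,
      (∀ j, 0 ≤ S j) ∧
      (∀ j j', j ≠ j' → S j + p j ≤ S j' ∨ S j' + p j' ≤ S j) ∧
      (Finset.univ.filter (fun j => S j < u2)).card ≤ m ∧
      ∑ j, (S j + p j) ≤
        (M * u2 + M * (M + 1) / 2) +
        (2 * (P + A) * ((m : ℝ) * ((m : ℝ) + 1) / 2) + (u2 + M) * m) +
        (M * (u2 + M + P * m + A) + M * (M * (M + 1) / 2)) := by
  classical
  set q : Fin n → ℝ := fun i => P + (e i : ℝ) with hqdef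
  have hqi : ∀ i, q i = P + (e i : ℝ) := fun i => by rw [hqdef]
  have hq0 : ∀ i, 0 ≤ q i := fun i => by
    rw [hqi]; exact add_nonneg hP0 (Nat.cast_nonneg _)
  have hM0 : (0:ℝ) ≤ M := le_trans zero_le_one hM1
  have hsumq : ∀ (F : Finset (Fin n)), F.card = m → (∑ i ∈ F, (e i : ℝ)) = A →
      ∑ j ∈ F, q j = u2 := by
    intro F h1 h2
    simp only [hqdef]
    rw [Finset.sum_add_distrib, Finset.sum_const, h1, h2, hu2, nsmul_eq_mul]
  have hHq : ∑ j ∈ H, q j = u2 := hsumq H hcard hHe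
  have hCq : ∑ j ∈ Hᶜ, q j = u2 := hsumq Hᶜ hccard hCe
  have hu20 : 0 ≤ u2 := by
    rw [hu2]
    exact add_nonneg (mul_nonneg (Nat.cast_nonneg _) hP0) hA0
  have hfnn : ∀ (F : Finset (Fin n)) (i : Fin n),
      0 ≤ ∑ j ∈ F.filter (fun j => j < i), q j :=
    fun F i => Finset.sum_nonneg fun j _ => hq0 j
  have hkey : ∀ (F : Finset (Fin n)) (i : Fin n), i ∈ F →
      (∑ j ∈ F.filter (fun j => j < i), q j) + q i
        = ∑ j ∈ F.filter (fun j => j ≤ i), q j := by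
    intro F i hi
    have h : F.filter (fun j => j ≤ i) = insert i (F.filter (fun j => j < i)) := by
      ext x
      simp only [Finset.mem_filter, Finset.mem_insert]
      constructor
      · rintro ⟨hx, hle⟩
        rcases eq_or_lt_of_le hle with h | h
        · exact Or.inl h
        · exact Or.inr ⟨hx, h⟩
      · rintro (rfl | ⟨hx, h⟩)
        · exact ⟨hi, le_rfl⟩
        · exact ⟨hx, h.le⟩
    rw [h, Finset.sum_insert (by simp)]
    ring
  have hCle : ∀ (F : Finset (Fin n)) (i : Fin n),
      ∑ j ∈ F.filter (fun j => j ≤ i), q j ≤ ∑ j ∈ F, q j :=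
    fun F i => Finset.sum_le_sum_of_subset_of_nonneg (Finset.filter_subset _ _)
      (fun j _ _ => hq0 j)
  have hmono : ∀ (F : Finset (Fin n)) (i i' : Fin n), i < i' →
      ∑ j ∈ F.filter (fun j => j ≤ i), q j ≤ ∑ j ∈ F.filter (fun j => j < i'), q j :=
    fun F i i' h => Finset.sum_le_sum_of_subset_of_nonneg
      (fun j hj => by
        simp only [Finset.mem_filter] at hj ⊢
        exact ⟨hj.1, lt_of_le_of_lt hj.2 h⟩)
      (fun j _ _ => hq0 j)
  -- the schedule
  set Sm : Fin n → ℝ := fun i =>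
    if i ∈ H then ∑ j ∈ H.filter (fun j => j < i), q j
    else u2 + M + ∑ j ∈ Hᶜ.filter (fun j => j < i), q j with hSm
  set Ss : Fin Mn → ℝ := fun k => u2 + k with hSs
  set Sb : Fin Mn → ℝ := fun k => 2 * u2 + M + k * M with hSb
  have hSmH : ∀ i ∈ H, Sm i = ∑ j ∈ H.filter (fun j => j < i), q j := by
    intro i hi; rw [hSm]; simp only [if_pos hi]
  have hSmC : ∀ i, i ∉ H → Sm i = u2 + M + ∑ j ∈ Hᶜ.filter (fun j => j < i), q j := by
    intro i hi; rw [hSm]; simp only [if_neg hi]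
  have hCmH : ∀ i ∈ H, Sm i + q i ≤ u2 := by
    intro i hi
    rw [hSmH i hi, hkey H i hi, ← hHq]
    exact hCle H i
  have hCmC : ∀ i, i ∉ H → Sm i + q i ≤ 2 * u2 + M := by
    intro i hi
    have hi' : i ∈ Hᶜ := Finset.mem_compl.2 hi
    rw [hSmC i hi, add_assoc, hkey Hᶜ i hi']
    have := hCle Hᶜ i
    rw [hCq] at this
    linarith
  have hSm0 : ∀ i, 0 ≤ Sm i := by
    intro i
    by_cases hi : i ∈ H
    · rw [hSmH i hi]; exact hfnn H i
    · rw [hSmC i hi]; have := hfnn Hᶜ i; linarith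
  have hSmClb : ∀ i, i ∉ H → u2 + M ≤ Sm i := by
    intro i hi; rw [hSmC i hi]; have := hfnn Hᶜ i; linarith
  have hkM : ∀ k : Fin Mn, (k : ℝ) + 1 ≤ M := by
    intro k
    have h1 : ((k : ℕ) : ℝ) + 1 ≤ (Mn : ℝ) := by exact_mod_cast k.isLt
    rw [hMncast] at h1; exact h1
  have hk0 : ∀ k : Fin Mn, (0:ℝ) ≤ (k : ℝ) := fun k => Nat.cast_nonneg _
  -- ordering of medium jobs
  have hordm : ∀ i i' : Fin n, i ≠ i' → Sm i + q i ≤ Sm i' ∨ Sm i' + q i' ≤ Sm i := by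
    intro i i' hne
    by_cases hi : i ∈ H <;> by_cases hi' : i' ∈ H
    · rcases hne.lt_or_gt with h | h
      · left
        rw [hSmH i hi, hSmH i' hi', hkey H i hi]
        exact hmono H i i' h
      · right
        rw [hSmH i hi, hSmH i' hi', hkey H i' hi']
        exact hmono H i' i h
    · left
      have := hCmH i hi
      have := hSmClb i' hi'
      linarith
    · right
      have := hCmH i' hi'
      have := hSmClb i hi
      linarith
    · have hiC : i ∈ Hᶜ := Finset.mem_compl.2 hi
      have hiC' : i' ∈ Hᶜ := Finset.mem_compl.2 hi'
      rcases hne.lt_or_gt with h | h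
      · left
        rw [hSmC i hi, hSmC i' hi', add_assoc, hkey Hᶜ i hiC]
        have := hmono Hᶜ i i' h
        linarith
      · right
        rw [hSmC i hi, hSmC i' hi', add_assoc, hkey Hᶜ i' hiC']
        have := hmono Hᶜ i' i h
        linarith
  refine ⟨Sum.elim Sm (Sum.elim Ss Sb), ?_, ?_, ?_, ?_⟩
  · rintro (i | k | k)
    · exact hSm0 i
    · simp only [Sum.elim_inr, Sum.elim_inl, hSs]
      exact add_nonneg hu20 (hk0 k)
    · simp only [Sum.elim_inr, hSb]
      have := hk0 k
      nlinarith
  · rintro (i | k | k) (i' | k' | k') hne <;>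
      simp only [Sum.elim_inl, Sum.elim_inr, hpm, hps, hpb]
    · -- med med
      have h := hordm i i' (fun h => hne (by rw [h]))
      rw [hqi, hqi] at h
      exact h
    · -- med small
      by_cases hi : i ∈ H
      · left
        have := hCmH i hi
        rw [hqi] at this
        have := hk0 k'
        simp only [hSs]
        linarith
      · right
        have := hSmClb i hi
        have := hkM k'
        simp only [hSs]
        linarith
    · -- med big
      left
      have h1 : Sm i + q i ≤ 2 * u2 + M := by
        by_cases hi : i ∈ H
        · have := hCmH i hi; linarith [hM0, hu20]
        · exact hCmC i hi
      rw [hqi] at h1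
      have := mul_nonneg (hk0 k') hM0
      simp only [hSb]
      linarith
    · -- small med
      by_cases hi : i' ∈ H
      · right
        have := hCmH i' hi
        rw [hqi] at this
        have := hk0 k
        simp only [hSs]
        linarith
      · left
        have := hSmClb i' hi
        have := hkM k
        simp only [hSs]
        linarith
    · -- small small
      have hkk : k ≠ k' := fun h => hne (by rw [h])
      simp only [hSs]
      rcases hkk.lt_or_gt with h | h
      · left
        have : ((k : ℕ) : ℝ) + 1 ≤ ((k' : ℕ) : ℝ) := by exact_mod_cast h
        linarith
      · right
        have : ((k' : ℕ) : ℝ) + 1 ≤ ((k : ℕ) : ℝ) := by exact_mod_cast h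
        linarith
    · -- small big
      left
      have := hkM k
      have := mul_nonneg (hk0 k') hM0
      simp only [hSs, hSb]
      linarith
    · -- big med
      right
      have h1 : Sm i' + q i' ≤ 2 * u2 + M := by
        by_cases hi : i' ∈ H
        · have := hCmH i' hi; linarith [hM0, hu20]
        · exact hCmC i' hi
      rw [hqi] at h1
      have := mul_nonneg (hk0 k) hM0
      simp only [hSb]
      linarith
    · -- big small
      right
      have := hkM k'
      have := mul_nonneg (hk0 k) hM0
      simp only [hSs, hSb]
      linarith
    · -- big big
      have hkk : k ≠ k' := fun h => hne (by rw [h])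
      simp only [hSb]
      rcases hkk.lt_or_gt with h | h
      · left
        have h1 : ((k : ℕ) : ℝ) + 1 ≤ ((k' : ℕ) : ℝ) := by exact_mod_cast h
        nlinarith
      · right
        have h1 : ((k' : ℕ) : ℝ) + 1 ≤ ((k : ℕ) : ℝ) := by exact_mod_cast h
        nlinarith
  · -- cardinality
    have hsub : Finset.univ.filter (fun j => Sum.elim Sm (Sum.elim Ss Sb) j < u2)
        ⊆ H.map ⟨Sum.inl, Sum.inl_injective⟩ := by
      intro j hj
      simp only [Finset.mem_filter] at hj
      rcases j with i | k | k
      · simp only [Sum.elim_inl] at hj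
        simp only [Finset.mem_map, Function.Embedding.coeFn_mk]
        refine ⟨i, ?_, rfl⟩
        by_contra hi
        have := hSmClb i hi
        linarith [hj.2, hM1]
      · exfalso
        simp only [Sum.elim_inr, Sum.elim_inl, hSs] at hj
        linarith [hj.2, hk0 k]
      · exfalso
        simp only [Sum.elim_inr, hSb] at hj
        linarith [hj.2, hu20, hM0, mul_nonneg (hk0 k) hM0]
    calc (Finset.univ.filter (fun j => Sum.elim Sm (Sum.elim Ss Sb) j < u2)).card
        ≤ (H.map ⟨Sum.inl, Sum.inl_injective⟩).card := Finset.card_le_card hsub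
      _ = m := by rw [Finset.card_map, hcard]
  · -- total completion time
    rw [Fintype.sum_sum_type, Fintype.sum_sum_type]
    simp only [Sum.elim_inl, Sum.elim_inr, hpm, hps, hpb]
    have hgauss : ∑ k : Fin Mn, ((k : ℝ) + 1) = M * (M + 1) / 2 := by
      rw [Fin.sum_univ_eq_sum_range (fun k => ((k : ℝ) + 1)), sum_id_real, hMncast]
    have hsmall : ∑ k : Fin Mn, (Ss k + 1) = M * u2 + M * (M + 1) / 2 := by
      simp only [hSs]
      have : ∀ k : Fin Mn, (u2 + (k : ℝ)) + 1 = u2 + ((k : ℝ) + 1) := fun k => by ring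
      rw [Finset.sum_congr rfl (fun k _ => this k), Finset.sum_add_distrib,
        Finset.sum_const, Finset.card_univ, Fintype.card_fin, nsmul_eq_mul, hgauss, hMncast]
    have hbig : ∑ k : Fin Mn, (Sb k + M) = M * (2 * u2 + M) + M * (M * (M + 1) / 2) := by
      simp only [hSb]
      have : ∀ k : Fin Mn, (2 * u2 + M + (k : ℝ) * M) + M
          = (2 * u2 + M) + ((k : ℝ) + 1) * M := fun k => by ring
      rw [Finset.sum_congr rfl (fun k _ => this k), Finset.sum_add_distrib,
        Finset.sum_const, Finset.card_univ, Fintype.card_fin, nsmul_eq_mul,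
        ← Finset.sum_mul, hgauss, hMncast]
      ring
    have hbatch : ∀ (F : Finset (Fin n)), F.card = m → (∑ i ∈ F, (e i : ℝ)) = A →
        ∑ i ∈ F, (∑ j ∈ F.filter (fun j => j ≤ i), q j)
          ≤ P * ((m : ℝ) * ((m : ℝ) + 1) / 2) + A * m := by
      intro F h1 h2
      have hstep : ∀ i ∈ F, ∑ j ∈ F.filter (fun j => j ≤ i), q j
          ≤ ((F.filter (fun j => j ≤ i)).card : ℝ) * P + A := by
        intro i hi
        simp only [hqdef]
        rw [Finset.sum_add_distrib, Finset.sum_const, nsmul_eq_mul]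
        have : ∑ j ∈ F.filter (fun j => j ≤ i), ((e j : ℝ))
            ≤ ∑ j ∈ F, ((e j : ℝ)) :=
          Finset.sum_le_sum_of_subset_of_nonneg (Finset.filter_subset _ _)
            (fun j _ _ => Nat.cast_nonneg _)
        rw [h2] at this
        linarith
      calc ∑ i ∈ F, (∑ j ∈ F.filter (fun j => j ≤ i), q j)
          ≤ ∑ i ∈ F, (((F.filter (fun j => j ≤ i)).card : ℝ) * P + A) :=
            Finset.sum_le_sum hstep
        _ = (∑ i ∈ F, ((F.filter (fun j => j ≤ i)).card : ℝ)) * P + A * F.card := by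
            rw [Finset.sum_add_distrib, ← Finset.sum_mul, Finset.sum_const, nsmul_eq_mul]
            ring
        _ = P * ((m : ℝ) * ((m : ℝ) + 1) / 2) + A * m := by
            rw [rank_sum, h1]; ring
    have hmedH : ∑ i ∈ H, (Sm i + (P + (e i : ℝ)))
        ≤ P * ((m : ℝ) * ((m : ℝ) + 1) / 2) + A * m := by
      have h1 : ∀ i ∈ H, Sm i + (P + (e i : ℝ))
          = ∑ j ∈ H.filter (fun j => j ≤ i), q j := by
        intro i hi
        rw [← hqi, hSmH i hi, hkey H i hi]
      rw [Finset.sum_congr rfl h1]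
      exact hbatch H hcard hHe
    have hmedC : ∑ i ∈ Hᶜ, (Sm i + (P + (e i : ℝ)))
        ≤ (u2 + M) * m + (P * ((m : ℝ) * ((m : ℝ) + 1) / 2) + A * m) := by
      have h1 : ∀ i ∈ Hᶜ, Sm i + (P + (e i : ℝ))
          = (u2 + M) + ∑ j ∈ Hᶜ.filter (fun j => j ≤ i), q j := by
        intro i hi
        have hiH : i ∉ H := Finset.mem_compl.1 hi
        rw [← hqi, hSmC i hiH, add_assoc, hkey Hᶜ i hi]
      rw [Finset.sum_congr rfl h1, Finset.sum_add_distrib, Finset.sum_const, hccard,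
        nsmul_eq_mul]
      have := hbatch Hᶜ hccard hCe
      linarith
    have hmed : ∑ i : Fin n, (Sm i + (P + (e i : ℝ)))
        ≤ 2 * P * ((m : ℝ) * ((m : ℝ) + 1) / 2) + 2 * A * m + (u2 + M) * m := by
      rw [← Finset.sum_add_sum_compl H]
      linarith
    have hm1R : (1 : ℝ) ≤ (m : ℝ) := by exact_mod_cast hm1
    have hAm : A * (m : ℝ) * ((m : ℝ) - 1) ≥ 0 :=
      mul_nonneg (mul_nonneg hA0 (Nat.cast_nonneg _)) (by linarith)
    have hVb : u2 + M + P * m + A = 2 * u2 + M := by rw [hu2]; ring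
    rw [hsmall, hbig]
    nlinarith [hmed]

/-- If EQUAL-CARDINALITY-PARTITION has a solution `H` (with
`|H| = n/2` and `∑_{i∈H} e i = A`), then the constructed scheduling instance has a
feasible schedule (nonnegative start times, pairwise disjoint processing intervals,
at most `n/2` jobs starting before `u₂`) of total completion time at most `V'`. -/
theorem partition_yes_implies_schedule (n A : ℕ) (hn : 2 ≤ n) (heven : Even n)
    (e : Fin n → ℕ) (hsum : ∑ i, e i = 2 * A)
    (H : Finset (Fin n)) (hcard : H.card = n / 2) (hA : ∑ i ∈ H, e i = A) :
    ∃ S : RedJob n → ℝ,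
      (∀ j, 0 ≤ S j) ∧
      (∀ j j', j ≠ j' →
        S j + redProc n e j ≤ S j' ∨ S j' + redProc n e j' ≤ S j) ∧
      (Finset.univ.filter (fun j => S j < redU2 n A)).card ≤ n / 2 ∧
      ∑ j, (S j + redProc n e j) ≤ redV' n A := by
  classical
  have hccard : Hᶜ.card = n / 2 := by
    rw [Finset.card_compl, hcard, Fintype.card_fin]
    obtain ⟨k, hk⟩ := heven
    omega
  have hCe : ∑ i ∈ Hᶜ, e i = A := by
    have h := Finset.sum_add_sum_compl H e
    rw [hA, hsum] at h
    omega
  have hP0 : (0:ℝ) ≤ (20 : ℝ) ^ n ^ 2 := by positivity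
  have hM1 : (1:ℝ) ≤ (200 : ℝ) ^ n ^ 2 := one_le_pow₀ (by norm_num)
  have hMncast : ((200 ^ n ^ 2 : ℕ) : ℝ) = (200 : ℝ) ^ n ^ 2 := by push_cast; ring
  have hm1 : 1 ≤ n / 2 := by omega
  obtain ⟨S, h1, h2, h3, h4⟩ :=
    aux_main (Mn := 200 ^ n ^ 2) e ((20 : ℝ) ^ n ^ 2) ((200 : ℝ) ^ n ^ 2) (A : ℝ)
      (redU2 n A) (redProc n e)
      (fun i => rfl) (fun k => rfl) (fun k => rfl)
      hP0 hM1 hMncast hm1 (Nat.cast_nonneg A)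
      H hcard hccard
      (by rw [← Nat.cast_sum, hA]) (by rw [← Nat.cast_sum, hCe])
      (by rw [redU2])
  refine ⟨S, h1, h2, h3, ?_⟩
  calc ∑ j, (S j + redProc n e j) ≤ _ := h4
    _ = redV' n A := by
      rw [redV', redVs, redVm, redVb]
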